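/- Let X ∈ L_n. Then X is a fixed point of T (i.e., X maximizes Y ↦ X·Y over L_n) if and only if X² = DX for some diagonal matrix D. -/

import Mathlib

open Matrix Finset

def elliptope (n : ℕ) : Set (Matrix (Fin n) (Fin n) ℝ) :=
  {X | X.PosSemidef ∧ ∀ i, X i i = 1}

def frob {n : ℕ} (A B : Matrix (Fin n) (Fin n) ℝ) : ℝ :=
  ∑ i, ∑ j, A i j * B i j

lemma dot_self_nonneg {n : ℕ} (v : Fin n → ℝ) : 0 ≤ v ⬝ᵥ v :=
  Finset.sum_nonneg fun i _ => mul_self_nonneg _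

lemma maxdot {n : ℕ} (g u : Fin n → ℝ) (hu : u ⬝ᵥ u = 1)
    (h : ∀ v : Fin n → ℝ, v ⬝ᵥ v = 1 → g ⬝ᵥ v ≤ g ⬝ᵥ u) :
    g = (g ⬝ᵥ u) • u := by
  by_cases hg : g = 0
  · simp [hg]
  · have h0 : 0 < g ⬝ᵥ g :=
      (dot_self_nonneg g).lt_of_ne fun e => hg (dotProduct_self_eq_zero.mp e.symm)
    set r := Real.sqrt (g ⬝ᵥ g) with hr
    have hr0 : 0 < r := Real.sqrt_pos.mpr h0
    have hrr : r * r = g ⬝ᵥ g := Real.mul_self_sqrt h0.le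
    have hv : (r⁻¹ • g) ⬝ᵥ (r⁻¹ • g) = 1 := by
      rw [smul_dotProduct, dotProduct_smul, smul_eq_mul, smul_eq_mul, ← hrr]
      field_simp
    have h1 : g ⬝ᵥ (r⁻¹ • g) = r := by
      rw [dotProduct_smul, smul_eq_mul, ← hrr]
      field_simp
    have hc : r ≤ g ⬝ᵥ u := h1 ▸ h _ hv
    set c := g ⬝ᵥ u with hcdef
    have key : (g - c • u) ⬝ᵥ (g - c • u) = g ⬝ᵥ g - c * c := by
      simp only [sub_dotProduct, dotProduct_sub, smul_dotProduct, dotProduct_smul,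
        smul_eq_mul, dotProduct_comm u g, hu, ← hcdef]
      ring
    have hle : (g - c • u) ⬝ᵥ (g - c • u) ≤ 0 := by
      rw [key]; nlinarith
    have hz : g - c • u = 0 :=
      dotProduct_self_eq_zero.mp (le_antisymm hle (dot_self_nonneg _))
    exact sub_eq_zero.mp hz

open scoped MatrixOrder in
lemma psd_sqrt_exists {n : ℕ} {A : Matrix (Fin n) (Fin n) ℝ} (hA : A.PosSemidef) :
    ∃ S : Matrix (Fin n) (Fin n) ℝ, Sᵀ = S ∧ S * S = A :=
  ⟨CFC.sqrt A, (CFC.sqrt_nonneg A).posSemidef.1, CFC.sqrt_mul_sqrt_self A hA.nonneg⟩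

lemma frob_nonneg' {n : ℕ} {A B : Matrix (Fin n) (Fin n) ℝ}
    (hA : A.PosSemidef) (hB : B.PosSemidef) : 0 ≤ ∑ i, ∑ j, A i j * B i j := by
  obtain ⟨S, hSsym, hSS⟩ := psd_sqrt_exists hA
  have hs : ∀ a b, S a b = S b a := fun a b => by conv_lhs => rw [← hSsym, transpose_apply]
  have key : ∑ i, ∑ j, A i j * B i j = ∑ m, ∑ i, ∑ j, S m i * B i j * S m j := by
    rw [← hSS]
    calc ∑ i, ∑ j, (S * S) i j * B i j
        = ∑ i, ∑ j, ∑ m, S m i * B i j * S m j := by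
          refine Finset.sum_congr rfl fun i _ => Finset.sum_congr rfl fun j _ => ?_
          rw [Matrix.mul_apply, Finset.sum_mul]
          refine Finset.sum_congr rfl fun m _ => ?_
          rw [hs i m]
          ring
      _ = ∑ i, ∑ m, ∑ j, S m i * B i j * S m j :=
          Finset.sum_congr rfl fun i _ => Finset.sum_comm
      _ = ∑ m, ∑ i, ∑ j, S m i * B i j * S m j := Finset.sum_comm
  rw [key]
  refine Finset.sum_nonneg fun m _ => ?_
  have := hB.dotProduct_mulVec_nonneg (fun i => S m i)
  simpa [dotProduct, Matrix.mulVec, Finset.mul_sum, mul_assoc] using this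

lemma bwd {n : ℕ} (X : Matrix (Fin n) (Fin n) ℝ) (hX : X ∈ elliptope n)
    (D : Matrix (Fin n) (Fin n) ℝ) (hD : D.IsDiag) (hDX : X * X = D * X) :
    ∀ Y ∈ elliptope n, frob X Y ≤ frob X X := by
  obtain ⟨hXpsd, hXdiag⟩ := hX
  have hXsym : Xᵀ = X := hXpsd.1
  have hxs : ∀ a b, X a b = X b a := fun a b => by conv_lhs => rw [← hXsym, transpose_apply]
  have hdiagD : D = Matrix.diagonal (fun i => D i i) := (Matrix.IsDiag.diagonal_diag hD).symm
  have hDXii : ∀ i, (D * X) i i = D i i := by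
    intro i
    rw [Matrix.mul_apply]
    rw [Finset.sum_eq_single i (fun k _ hk => by rw [hD (Ne.symm hk), zero_mul])
      (fun h => absurd (Finset.mem_univ i) h)]
    rw [hXdiag i, mul_one]
  have hDval : ∀ i, D i i = ∑ j, X i j ^ 2 := by
    intro i
    rw [← hDXii i, ← hDX, Matrix.mul_apply]
    exact Finset.sum_congr rfl fun j _ => by rw [hxs j i]; ring
  have hd1 : ∀ i, 1 ≤ D i i := by
    intro i
    rw [hDval i]
    calc (1:ℝ) = X i i ^ 2 := by rw [hXdiag i]; norm_num
      _ ≤ ∑ j, X i j ^ 2 :=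
        Finset.single_le_sum (f := fun j => X i j ^ 2) (fun j _ => sq_nonneg _) (Finset.mem_univ i)
  have hd0 : ∀ i, (0:ℝ) < D i i := fun i => lt_of_lt_of_le zero_lt_one (hd1 i)
  set E : Matrix (Fin n) (Fin n) ℝ := Matrix.diagonal (fun i => (D i i)⁻¹) with hEdef
  have hDE : D * E = 1 := by
    conv_lhs => rw [hdiagD]
    rw [hEdef, Matrix.diagonal_mul_diagonal]
    have : (fun i => D i i * (D i i)⁻¹) = fun _ => (1:ℝ) :=
      funext fun i => mul_inv_cancel₀ (hd0 i).ne'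
    rw [this, Matrix.diagonal_one]
  have hED : E * D = 1 := by
    conv_lhs => rw [hdiagD]
    rw [hEdef, Matrix.diagonal_mul_diagonal]
    have : (fun i => (D i i)⁻¹ * D i i) = fun _ => (1:ℝ) :=
      funext fun i => inv_mul_cancel₀ (hd0 i).ne'
    rw [this, Matrix.diagonal_one]
  set A : Matrix (Fin n) (Fin n) ℝ := D - X with hAdef
  have hXD : X * D = D * X := by
    have h1 : (X * X)ᵀ = X * X := by rw [Matrix.transpose_mul, hXsym]
    calc X * D = (D * X)ᵀ := by
          rw [Matrix.transpose_mul, hXsym]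
          congr 1
          rw [hdiagD, Matrix.diagonal_transpose]
      _ = (X * X)ᵀ := by rw [hDX]
      _ = X * X := h1
      _ = D * X := hDX
  have hAD : A * D = D * A := by
    rw [hAdef, Matrix.sub_mul, Matrix.mul_sub, hXD]
  have hAX : A * X = 0 := by
    rw [hAdef, Matrix.sub_mul, ← hDX, sub_self]
  have hAA : A * A = A * D := by
    calc A * A = A * D - A * X := by rw [hAdef, Matrix.mul_sub]
      _ = A * D := by rw [hAX, sub_zero]
  have hAE : A * E = E * A := by
    calc A * E = (E * D) * (A * E) := by rw [hED, one_mul]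
      _ = E * ((D * A) * E) := by rw [Matrix.mul_assoc, Matrix.mul_assoc]
      _ = E * ((A * D) * E) := by rw [hAD]
      _ = (E * A) * (D * E) := by rw [Matrix.mul_assoc, Matrix.mul_assoc]
      _ = E * A := by rw [hDE, mul_one]
  have hAEA : A = A * E * A := by
    calc A = A * (D * E) := by rw [hDE, mul_one]
      _ = (A * D) * E := by rw [Matrix.mul_assoc]
      _ = (A * A) * E := by rw [hAA]
      _ = A * (A * E) := by rw [Matrix.mul_assoc]
      _ = A * (E * A) := by rw [hAE]
      _ = A * E * A := by rw [Matrix.mul_assoc]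
  have hAsym : Aᵀ = A := by
    rw [hAdef, Matrix.transpose_sub, hXsym]
    congr 1
    rw [hdiagD, Matrix.diagonal_transpose]
  have hEpsd : E.PosSemidef := by
    rw [hEdef]
    exact Matrix.posSemidef_diagonal_iff.mpr fun i => inv_nonneg.mpr (hd0 i).le
  have hApsd : A.PosSemidef := by
    have h := hEpsd.conjTranspose_mul_mul_same A
    rw [show Aᴴ = A from hAsym] at h
    rwa [← hAEA] at h
  intro Y hY
  obtain ⟨hYpsd, hYdiag⟩ := hY
  have h2 : 0 ≤ ∑ i, ∑ j, A i j * Y i j := frob_nonneg' hApsd hYpsd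
  have h1 : (∑ i, ∑ j, A i j * Y i j) = frob D Y - frob X Y := by
    unfold frob
    rw [← Finset.sum_sub_distrib]
    refine Finset.sum_congr rfl fun i _ => ?_
    rw [← Finset.sum_sub_distrib]
    refine Finset.sum_congr rfl fun j _ => ?_
    rw [hAdef]
    simp [Matrix.sub_apply, sub_mul]
  have h3 : frob D Y = ∑ i, D i i := by
    unfold frob
    refine Finset.sum_congr rfl fun i _ => ?_
    rw [Finset.sum_eq_single i (fun k _ hk => by rw [hD (Ne.symm hk), zero_mul])
      (fun h => absurd (Finset.mem_univ i) h)]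
    rw [hYdiag i, mul_one]
  have h4 : frob X X = ∑ i, D i i := by
    unfold frob
    refine Finset.sum_congr rfl fun i _ => ?_
    rw [← hDXii i, ← hDX, Matrix.mul_apply]
    exact Finset.sum_congr rfl fun j _ => by rw [hxs j i]
  linarith

lemma fwd {n : ℕ} (X : Matrix (Fin n) (Fin n) ℝ) (hX : X ∈ elliptope n)
    (h : ∀ Y ∈ elliptope n, frob X Y ≤ frob X X) :
    ∃ D : Matrix (Fin n) (Fin n) ℝ, D.IsDiag ∧ X * X = D * X := by
  obtain ⟨hXpsd, hXdiag⟩ := hX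
  have hXsym : Xᵀ = X := hXpsd.1
  have hxs : ∀ a b, X a b = X b a := fun a b => by conv_lhs => rw [← hXsym, transpose_apply]
  obtain ⟨S, hSsym, hSS⟩ := psd_sqrt_exists hXpsd
  have hs : ∀ a b, S a b = S b a := fun a b => by conv_lhs => rw [← hSsym, transpose_apply]
  have key : ∀ k, ∃ d : ℝ, ∀ j, (X * X) j k = d * X j k := by
    intro k
    set u : Fin n → ℝ := fun i => S i k with hudef
    set m : Fin n → ℝ := fun i => ∑ l, S i l * X l k with hmdef
    set g : Fin n → ℝ := fun i => m i - u i with hgdef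
    have hu : u ⬝ᵥ u = 1 := by
      have h1 : u ⬝ᵥ u = (S * S) k k := by
        rw [Matrix.mul_apply, dotProduct]
        exact Finset.sum_congr rfl fun i _ => by rw [hudef]; dsimp only; rw [hs i k]
      rw [h1, hSS, hXdiag k]
    -- the perturbation matrices
    set P : (Fin n → ℝ) → Matrix (Fin n) (Fin n) ℝ :=
      fun w => Matrix.of (fun j i => if i = k then w j else S j i) with hPdef
    have hsplit : ∀ f : Fin n → ℝ, ∑ i, f i = (∑ i ∈ Finset.univ.erase k, f i) + f k :=
      fun f => (Finset.sum_erase_add _ _ (Finset.mem_univ k)).symm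
    -- total-sum identity
    have htot : ∀ w : Fin n → ℝ, (∑ i, X i k * (∑ j, S j i * w j)) = m ⬝ᵥ w := by
      intro w
      calc ∑ i, X i k * (∑ j, S j i * w j)
          = ∑ i, ∑ j, X i k * (S j i * w j) := by
            exact Finset.sum_congr rfl fun i _ => Finset.mul_sum _ _ _
        _ = ∑ j, ∑ i, X i k * (S j i * w j) := Finset.sum_comm
        _ = ∑ j, m j * w j := by
            refine Finset.sum_congr rfl fun j _ => ?_
            rw [hmdef]
            dsimp only
            rw [Finset.sum_mul]
            exact Finset.sum_congr rfl fun i _ => by ring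
        _ = m ⬝ᵥ w := rfl
    have hcross : ∀ w : Fin n → ℝ,
        (∑ i ∈ Finset.univ.erase k, X i k * (∑ j, S j i * w j)) = g ⬝ᵥ w := by
      intro w
      have h1 := Finset.sum_erase_add Finset.univ
        (fun i => X i k * (∑ j, S j i * w j)) (Finset.mem_univ k)
      rw [htot w] at h1
      have h2 : X k k * (∑ j, S j k * w j) = u ⬝ᵥ w := by
        rw [hXdiag k, one_mul, dotProduct]
      have h3 : g ⬝ᵥ w = m ⬝ᵥ w - u ⬝ᵥ w := by
        rw [hgdef]
        simp only [dotProduct, sub_mul, Finset.sum_sub_distrib]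
      rw [h2] at h1
      rw [h3]
      linarith
    set C : ℝ := ∑ i ∈ Finset.univ.erase k, ∑ i' ∈ Finset.univ.erase k, X i i' * X i i'
      with hCdef
    -- entries of the Gram matrix
    have hYe : ∀ (w : Fin n → ℝ) i i', ((P w)ᵀ * (P w)) i i' = ∑ j, (P w) j i * (P w) j i' := by
      intro w i i'
      rw [Matrix.mul_apply]
      exact Finset.sum_congr rfl fun j _ => by rw [transpose_apply]
    have hYa : ∀ (w : Fin n → ℝ) i, i ≠ k → ∀ i', i' ≠ k → ((P w)ᵀ * (P w)) i i' = X i i' := by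
      intro w i hi i' hi'
      rw [hYe]
      have : ∀ j, (P w) j i * (P w) j i' = S i j * S j i' := by
        intro j
        rw [hPdef]
        simp only [Matrix.of_apply, if_neg hi, if_neg hi']
        rw [hs j i]
      rw [Finset.sum_congr rfl fun j _ => this j, ← Matrix.mul_apply, hSS]
    have hYb : ∀ (w : Fin n → ℝ) i, i ≠ k → ((P w)ᵀ * (P w)) i k = ∑ j, S j i * w j := by
      intro w i hi
      rw [hYe]
      refine Finset.sum_congr rfl fun j _ => ?_
      show (if i = k then w j else S j i) * (if k = k then w j else S j k) = S j i * w j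
      rw [if_neg hi, if_pos rfl]
    have hYb' : ∀ (w : Fin n → ℝ) i', i' ≠ k → ((P w)ᵀ * (P w)) k i' = ∑ j, S j i' * w j := by
      intro w i' hi'
      rw [hYe]
      refine Finset.sum_congr rfl fun j _ => ?_
      show (if k = k then w j else S j k) * (if i' = k then w j else S j i') = S j i' * w j
      rw [if_neg hi', if_pos rfl]
      ring
    have hYc : ∀ (w : Fin n → ℝ), ((P w)ᵀ * (P w)) k k = w ⬝ᵥ w := by
      intro w
      rw [hYe, dotProduct]
      refine Finset.sum_congr rfl fun j _ => ?_
      show (if k = k then w j else S j k) * (if k = k then w j else S j k) = w j * w j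
      rw [if_pos rfl]
    -- the master formula
    have hF : ∀ w : Fin n → ℝ, frob X ((P w)ᵀ * (P w)) = C + 2 * (g ⬝ᵥ w) + (w ⬝ᵥ w) := by
      intro w
      unfold frob
      rw [hsplit (fun i => ∑ i', X i i' * ((P w)ᵀ * (P w)) i i')]
      have e1 : ∀ i ∈ Finset.univ.erase k,
          (∑ i', X i i' * ((P w)ᵀ * (P w)) i i')
            = (∑ i' ∈ Finset.univ.erase k, X i i' * X i i') + X i k * (∑ j, S j i * w j) := by
        intro i hi
        have hik : i ≠ k := Finset.ne_of_mem_erase hi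
        rw [hsplit (fun i' => X i i' * ((P w)ᵀ * (P w)) i i')]
        congr 1
        · exact Finset.sum_congr rfl fun i' hi' =>
            by rw [hYa w i hik i' (Finset.ne_of_mem_erase hi')]
        · rw [hYb w i hik]
      have e2 : (∑ i', X k i' * ((P w)ᵀ * (P w)) k i')
          = (∑ i' ∈ Finset.univ.erase k, X k i' * (∑ j, S j i' * w j)) + (w ⬝ᵥ w) := by
        rw [hsplit (fun i' => X k i' * ((P w)ᵀ * (P w)) k i')]
        congr 1
        · exact Finset.sum_congr rfl fun i' hi' =>
            by rw [hYb' w i' (Finset.ne_of_mem_erase hi')]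
        · rw [hYc w, hXdiag k, one_mul]
      rw [Finset.sum_congr rfl e1, e2, Finset.sum_add_distrib, hcross w]
      have hc2 : (∑ i' ∈ Finset.univ.erase k, X k i' * (∑ j, S j i' * w j)) = g ⬝ᵥ w := by
        rw [← hcross w]
        exact Finset.sum_congr rfl fun i' _ => by rw [hxs k i']
      rw [hc2, hCdef]
      ring
    -- P u recovers S
    have hPu : P u = S := by
      ext j i
      rw [hPdef]
      simp only [Matrix.of_apply]
      split
      · next hik => rw [hudef]; dsimp only; rw [hik]
      · rfl
    have hfXX : frob X X = C + 2 * (g ⬝ᵥ u) + 1 := by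
      have : frob X X = frob X ((P u)ᵀ * (P u)) := by
        rw [hPu, hSsym, hSS]
      rw [this, hF u, hu]
    -- the inequality
    have hineq : ∀ v : Fin n → ℝ, v ⬝ᵥ v = 1 → g ⬝ᵥ v ≤ g ⬝ᵥ u := by
      intro v hv
      have hYpsd : ((P v)ᵀ * (P v)).PosSemidef := Matrix.posSemidef_conjTranspose_mul_self (P v)
      have hYdiag : ∀ i, ((P v)ᵀ * (P v)) i i = 1 := by
        intro i
        by_cases hik : i = k
        · rw [hik, hYc v, hv]
        · rw [hYa v i hik i hik, hXdiag i]
      have hle := h ((P v)ᵀ * (P v)) ⟨hYpsd, hYdiag⟩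
      rw [hF v, hv, hfXX] at hle
      linarith
    have hmax := maxdot g u hu hineq
    refine ⟨g ⬝ᵥ u + 1, fun j => ?_⟩
    have hm : ∀ i, m i = (g ⬝ᵥ u + 1) * u i := by
      intro i
      have h1 := congrFun hmax i
      rw [hgdef] at h1
      simp only [Pi.smul_apply, smul_eq_mul] at h1
      have : m i - u i = (g ⬝ᵥ u) * u i := h1
      linarith [this]
    have hXX : X * X = S * (S * X) := by rw [← Matrix.mul_assoc, hSS]
    have hSXm : ∀ i, (S * X) i k = m i := by
      intro i
      rw [Matrix.mul_apply, hmdef]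
    rw [hXX, Matrix.mul_apply]
    calc ∑ l, S j l * (S * X) l k
        = ∑ l, S j l * ((g ⬝ᵥ u + 1) * S l k) := by
          refine Finset.sum_congr rfl fun l _ => ?_
          rw [hSXm l, hm l]
      _ = (g ⬝ᵥ u + 1) * ∑ l, S j l * S l k := by
          rw [Finset.mul_sum]
          exact Finset.sum_congr rfl fun l _ => by ring
      _ = (g ⬝ᵥ u + 1) * X j k := by rw [← Matrix.mul_apply, hSS]
  choose d hd using key
  refine ⟨Matrix.diagonal d, Matrix.isDiag_diagonal d, ?_⟩
  ext j k
  have hXXsym : (X * X) j k = (X * X) k j := by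
    have h1 : (X * X)ᵀ = X * X := by rw [Matrix.transpose_mul, hXsym]
    conv_lhs => rw [← h1, transpose_apply]
  rw [Matrix.diagonal_mul]
  calc (X * X) j k = (X * X) k j := hXXsym
    _ = d j * X k j := hd j k
    _ = d j * X j k := by rw [hxs k j]


theorem stmt14 {n : ℕ} (X : Matrix (Fin n) (Fin n) ℝ) (hX : X ∈ elliptope n) :
    (∀ Y ∈ elliptope n, frob X Y ≤ frob X X) ↔
      ∃ D : Matrix (Fin n) (Fin n) ℝ, D.IsDiag ∧ X * X = D * X := by
  constructor
  · exact fwd X hX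
  · rintro ⟨D, hD, hDX⟩
    exact bwd X hX D hD hDX
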